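/- Let α = (9−√5)/38 and μ* = 5√5 − 11. The 9×9 real symmetric matrix N(μ*) is positive semidefinite. In particular, the Hardy point l2(μ*) belongs to the Almost Quantum set. -/

import Mathlib

noncomputable def α : ℝ := (9 - Real.sqrt 5) / 38

noncomputable def N (μ : ℝ) : Matrix (Fin 9) (Fin 9) ℝ :=
  !![1, μ/2+α*(1-μ), μ/2+2*α*(1-μ), μ/2+α*(1-μ), μ/2+2*α*(1-μ), μ/2, μ/2+α*(1-μ), μ/2+α*(1-μ), 0;
     μ/2+α*(1-μ), μ/2+α*(1-μ), 0, μ/2, μ/2+α*(1-μ), μ/2, μ/2+α*(1-μ), μ/2, 0;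
     μ/2+2*α*(1-μ), 0, μ/2+2*α*(1-μ), μ/2+α*(1-μ), 0, μ/2, 0, μ/2+α*(1-μ), 0;
     μ/2+α*(1-μ), μ/2, μ/2+α*(1-μ), μ/2+α*(1-μ), 0, μ/2, μ/2, μ/2+α*(1-μ), 0;
     μ/2+2*α*(1-μ), μ/2+α*(1-μ), 0, 0, μ/2+2*α*(1-μ), μ/2, μ/2+α*(1-μ), 0, 0;
     μ/2, μ/2, μ/2, μ/2, μ/2, μ/2, μ/2, μ/2, 0;
     μ/2+α*(1-μ), μ/2+α*(1-μ), 0, μ/2, μ/2+α*(1-μ), μ/2, μ/2+α*(1-μ), μ/2, 0;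
     μ/2+α*(1-μ), μ/2, μ/2+α*(1-μ), μ/2+α*(1-μ), 0, μ/2, μ/2, μ/2+α*(1-μ), 0;
     0, 0, 0, 0, 0, 0, 0, 0, 0]

private lemma qf_nonneg (s x0 x1 x2 x3 x4 x5 x6 x7 x8 : ℝ) (hs : s^2 = 5)
    (h2 : 0 ≤ 5*s-11) (ht : 0 ≤ 3-s) (hf : 0 ≤ 13*s-29) :
    0 ≤ x0*(1*x0 + ((5*s-11)/2 + (9-s)/38*(1-(5*s-11)))*x1 + ((5*s-11)/2 + 2*((9-s)/38)*(1-(5*s-11)))*x2 + ((5*s-11)/2 + (9-s)/38*(1-(5*s-11)))*x3 + ((5*s-11)/2 + 2*((9-s)/38)*(1-(5*s-11)))*x4 + ((5*s-11)/2)*x5 + ((5*s-11)/2 + (9-s)/38*(1-(5*s-11)))*x6 + ((5*s-11)/2 + (9-s)/38*(1-(5*s-11)))*x7 + 0*x8) + x1*(((5*s-11)/2 + (9-s)/38*(1-(5*s-11)))*x0 + ((5*s-11)/2 + (9-s)/38*(1-(5*s-11)))*x1 + 0*x2 + ((5*s-11)/2)*x3 + ((5*s-11)/2 + (9-s)/38*(1-(5*s-11)))*x4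 + ((5*s-11)/2)*x5 + ((5*s-11)/2 + (9-s)/38*(1-(5*s-11)))*x6 + ((5*s-11)/2)*x7 + 0*x8) + x2*(((5*s-11)/2 + 2*((9-s)/38)*(1-(5*s-11)))*x0 + 0*x1 + ((5*s-11)/2 + 2*((9-s)/38)*(1-(5*s-11)))*x2 + ((5*s-11)/2 + (9-s)/38*(1-(5*s-11)))*x3 + 0*x4 + ((5*s-11)/2)*x5 + 0*x6 + ((5*s-11)/2 + (9-s)/38*(1-(5*s-11)))*x7 + 0*x8) + x3*(((5*s-11)/2 + (9-s)/38*(1-(5*s-11)))*x0 + ((5*s-11)/2)*x1 + ((5*s-11)/2 + (9-s)/38*(1-(5*s-11)))*x2 + ((5*s-11)/2 + (9-s)/38*(1-(5*s-11)))*x3 + 0*x4 + ((5*s-11)/2)*x5 + ((5*s-11)/2)*x6 + ((5*s-11)/2 + (9-s)/38*(1-(5*s-11)))*x7 + 0*x8) + x4*(((5*s-11)/2 + 2*((9-s)/38)*(1-(5*s-11)))*x0 + ((5*s-11)/2 + (9-s)/38*(1-(5*s-11)))*x1 + 0*x2 + 0*x3 + ((5*s-11)/2 + 2*((9-s)/38)*(1-(5*s-11)))*x4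 + ((5*s-11)/2)*x5 + ((5*s-11)/2 + (9-s)/38*(1-(5*s-11)))*x6 + 0*x7 + 0*x8) + x5*(((5*s-11)/2)*x0 + ((5*s-11)/2)*x1 + ((5*s-11)/2)*x2 + ((5*s-11)/2)*x3 + ((5*s-11)/2)*x4 + ((5*s-11)/2)*x5 + ((5*s-11)/2)*x6 + ((5*s-11)/2)*x7 + 0*x8) + x6*(((5*s-11)/2 + (9-s)/38*(1-(5*s-11)))*x0 + ((5*s-11)/2 + (9-s)/38*(1-(5*s-11)))*x1 + 0*x2 + ((5*s-11)/2)*x3 + ((5*s-11)/2 + (9-s)/38*(1-(5*s-11)))*x4 + ((5*s-11)/2)*x5 + ((5*s-11)/2 + (9-s)/38*(1-(5*s-11)))*x6 + ((5*s-11)/2)*x7 + 0*x8) + x7*(((5*s-11)/2 + (9-s)/38*(1-(5*s-11)))*x0 + ((5*s-11)/2)*x1 + ((5*s-11)/2 + (9-s)/38*(1-(5*s-11)))*x2 + ((5*s-11)/2 + (9-s)/38*(1-(5*s-11)))*x3 + 0*x4 + ((5*s-11)/2)*x5 + ((5*s-11)/2)*x6 + ((5*s-11)/2 + (9-s)/38*(1-(5*s-11)))*x7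 + 0*x8) + x8*(0*x0 + 0*x1 + 0*x2 + 0*x3 + 0*x4 + 0*x5 + 0*x6 + 0*x7 + 0*x8) := by
  have key : x0*(1*x0 + ((5*s-11)/2 + (9-s)/38*(1-(5*s-11)))*x1 + ((5*s-11)/2 + 2*((9-s)/38)*(1-(5*s-11)))*x2 + ((5*s-11)/2 + (9-s)/38*(1-(5*s-11)))*x3 + ((5*s-11)/2 + 2*((9-s)/38)*(1-(5*s-11)))*x4 + ((5*s-11)/2)*x5 + ((5*s-11)/2 + (9-s)/38*(1-(5*s-11)))*x6 + ((5*s-11)/2 + (9-s)/38*(1-(5*s-11)))*x7 + 0*x8) + x1*(((5*s-11)/2 + (9-s)/38*(1-(5*s-11)))*x0 + ((5*s-11)/2 + (9-s)/38*(1-(5*s-11)))*x1 + 0*x2 + ((5*s-11)/2)*x3 + ((5*s-11)/2 + (9-s)/38*(1-(5*s-11)))*x4 + ((5*s-11)/2)*x5 + ((5*s-11)/2 + (9-s)/38*(1-(5*s-11)))*x6 + ((5*s-11)/2)*x7 + 0*x8) + x2*(((5*s-11)/2 + 2*((9-s)/38)*(1-(5*s-11)))*x0 + 0*x1 + ((5*s-11)/2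 + 2*((9-s)/38)*(1-(5*s-11)))*x2 + ((5*s-11)/2 + (9-s)/38*(1-(5*s-11)))*x3 + 0*x4 + ((5*s-11)/2)*x5 + 0*x6 + ((5*s-11)/2 + (9-s)/38*(1-(5*s-11)))*x7 + 0*x8) + x3*(((5*s-11)/2 + (9-s)/38*(1-(5*s-11)))*x0 + ((5*s-11)/2)*x1 + ((5*s-11)/2 + (9-s)/38*(1-(5*s-11)))*x2 + ((5*s-11)/2 + (9-s)/38*(1-(5*s-11)))*x3 + 0*x4 + ((5*s-11)/2)*x5 + ((5*s-11)/2)*x6 + ((5*s-11)/2 + (9-s)/38*(1-(5*s-11)))*x7 + 0*x8) + x4*(((5*s-11)/2 + 2*((9-s)/38)*(1-(5*s-11)))*x0 + ((5*s-11)/2 + (9-s)/38*(1-(5*s-11)))*x1 + 0*x2 + 0*x3 + ((5*s-11)/2 + 2*((9-s)/38)*(1-(5*s-11)))*x4 + ((5*s-11)/2)*x5 + ((5*s-11)/2 + (9-s)/38*(1-(5*s-11)))*x6 + 0*x7 + 0*x8) + x5*(((5*s-11)/2)*x0 + ((5*s-11)/2)*x1 + ((5*s-11)/2)*x2 + ((5*s-11)/2)*x3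 + ((5*s-11)/2)*x4 + ((5*s-11)/2)*x5 + ((5*s-11)/2)*x6 + ((5*s-11)/2)*x7 + 0*x8) + x6*(((5*s-11)/2 + (9-s)/38*(1-(5*s-11)))*x0 + ((5*s-11)/2 + (9-s)/38*(1-(5*s-11)))*x1 + 0*x2 + ((5*s-11)/2)*x3 + ((5*s-11)/2 + (9-s)/38*(1-(5*s-11)))*x4 + ((5*s-11)/2)*x5 + ((5*s-11)/2 + (9-s)/38*(1-(5*s-11)))*x6 + ((5*s-11)/2)*x7 + 0*x8) + x7*(((5*s-11)/2 + (9-s)/38*(1-(5*s-11)))*x0 + ((5*s-11)/2)*x1 + ((5*s-11)/2 + (9-s)/38*(1-(5*s-11)))*x2 + ((5*s-11)/2 + (9-s)/38*(1-(5*s-11)))*x3 + 0*x4 + ((5*s-11)/2)*x5 + ((5*s-11)/2)*x6 + ((5*s-11)/2 + (9-s)/38*(1-(5*s-11)))*x7 + 0*x8) + x8*(0*x0 + 0*x1 + 0*x2 + 0*x3 + 0*x4 + 0*x5 + 0*x6 + 0*x7 + 0*x8) = (x0 + (s-2)*x1 + (3-s)/2*x2 + (s-2)*x3 + (3-s)/2*x4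 + (5*s-11)/2*x5 + (s-2)*x6 + (s-2)*x7)^2 + (5*s-11)*(x1 - 1/2*x2 + (3-s)/4*x3 + (1+s)/4*x4 + (3-s)/2*x5 + x6 + (3-s)/4*x7)^2 + ((3-s)/4)*(x2 + (3*s-5)/2*x3 + (s-3)/2*x4 + (2*s-4)*x5 + (3*s-5)/2*x7)^2 + ((13*s-29)/2)*(x3 - (1+s)/2*x4 + (1-s)/2*x5 + x7)^2 := by
    linear_combination ((5/19)*x0*x1 + (10/19)*x0*x2 + (5/19)*x0*x3 + (10/19)*x0*x4 + (5/19)*x0*x6 + (5/19)*x0*x7 + (-33/38)*x1*x1 + (1/1)*x1*x2 + (1/2)*x1*x3 + (-47/38)*x1*x4 + (-33/19)*x1*x6 + (1/2)*x1*x7 + (1/76)*x2*x2 + (29/38)*x2*x3 + (1/1)*x2*x4 + (1/1)*x2*x5 + (1/1)*x2*x6 + (29/38)*x2*x7 + (-71/38)*x3*x3 + (2/1)*x3*x4 + (7/4)*x3*x5 + (1/2)*x3*x6 + (-71/19)*x3*x7 + (-17/152)*x4*x4 + (1/2)*x4*x5 + (-47/38)*x4*x6 + (2/1)*x4*x7 +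 (31/8)*x5*x5 + (7/4)*x5*x7 + (-33/38)*x6*x6 + (1/2)*x6*x7 + (-71/38)*x7*x7 + (1/4)*s*x3*x3 + (1/1)*s*x3*x4 + (1/4)*s*x3*x5 + (1/2)*s*x3*x7 + (-15/8)*s*x4*x4 + (-3/2)*s*x4*x5 + (1/1)*s*x4*x7 + (-15/8)*s*x5*x5 + (1/4)*s*x5*x7 + (1/4)*s*x7*x7) * hs
  rw [key]
  have t1 : 0 ≤ (5*s-11)*(x1 - 1/2*x2 + (3-s)/4*x3 + (1+s)/4*x4 + (3-s)/2*x5 + x6 + (3-s)/4*x7)^2 := mul_nonneg h2 (sq_nonneg _)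
  have t2 : 0 ≤ ((3-s)/4)*(x2 + (3*s-5)/2*x3 + (s-3)/2*x4 + (2*s-4)*x5 + (3*s-5)/2*x7)^2 := mul_nonneg (by linarith) (sq_nonneg _)
  have t3 : 0 ≤ ((13*s-29)/2)*(x3 - (1+s)/2*x4 + (1-s)/2*x5 + x7)^2 := mul_nonneg (by linarith) (sq_nonneg _)
  linarith [sq_nonneg (x0 + (s-2)*x1 + (3-s)/2*x2 + (s-2)*x3 + (3-s)/2*x4 + (5*s-11)/2*x5 + (s-2)*x6 + (s-2)*x7), t1, t2, t3]

theorem stmt7 : (N (5 * Real.sqrt 5 - 11)).PosSemidef := by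
  have hs : Real.sqrt 5 ^ 2 = 5 := Real.sq_sqrt (by norm_num)
  have hnn : (0:ℝ) ≤ Real.sqrt 5 := Real.sqrt_nonneg 5
  have h2 : (0:ℝ) ≤ 5 * Real.sqrt 5 - 11 := by nlinarith [hs, hnn]
  have ht : (0:ℝ) ≤ 3 - Real.sqrt 5 := by nlinarith [hs, hnn]
  have hf : (0:ℝ) ≤ 13 * Real.sqrt 5 - 29 := by nlinarith [hs, hnn]
  rw [Matrix.posSemidef_iff_dotProduct_mulVec]
  refine ⟨?_, fun x => ?_⟩
  · ext i j
    fin_cases i <;> fin_cases j <;> rfl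
  · have hx : x = ![x 0, x 1, x 2, x 3, x 4, x 5, x 6, x 7, x 8] := by
      ext i; fin_cases i <;> rfl
    simp only [star_trivial]
    rw [hx]
    simp only [N, α, Matrix.cons_mulVec, Matrix.cons_dotProduct, Matrix.dotProduct_of_isEmpty,
      Matrix.empty_mulVec, Matrix.head_cons, Matrix.tail_cons,
      zero_dotProduct, dotProduct_zero]
    linarith [qf_nonneg (Real.sqrt 5) (x 0) (x 1) (x 2) (x 3) (x 4) (x 5) (x 6) (x 7) (x 8) hs h2 ht hf]
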